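/- Let G be a finite group, N a normal subgroup such that the quotient G/N is abelian, and V a finite-dimensional irreducible complex representation of G. If the restriction of V to N is not irreducible, then there exists a nontrivial one-dimensional complex representation χ of G that is trivial on N and satisfies V ⊗ χ ≅ V. -/

import Mathlib

lemma maschke_proj {H : Type*} [Group H] [Finite H] {U : Type*} [AddCommGroup U]
    [Module ℂ U] (θ : Representation ℂ H U) (p : Submodule ℂ U)
    (hp : ∀ h : H, ∀ v ∈ p, θ h v ∈ p) :
    ∃ π : U →ₗ[ℂ] U, (∀ h : H, ∀ v : U, π (θ h v) = θ h (π v)) ∧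
      (∀ v : U, π v ∈ p) ∧ (∀ v ∈ p, π v = v) := by
  haveI := Fintype.ofFinite H
  obtain ⟨q, hq⟩ := Submodule.exists_isCompl p
  set pr : U →ₗ[ℂ] U := p.subtype ∘ₗ (p.linearProjOfIsCompl q hq) with hpr
  have hpr_mem : ∀ v : U, pr v ∈ p := fun v => (p.linearProjOfIsCompl q hq v).2
  have hpr_fix : ∀ v ∈ p, pr v = v := fun v hv => by
    simp [hpr, Submodule.linearProjOfIsCompl_apply_left hq ⟨v, hv⟩]
    exact congrArg Subtype.val (Submodule.linearProjOfIsCompl_apply_left hq ⟨v, hv⟩)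
  set c : ℂ := (Fintype.card H : ℂ) with hc
  have hc0 : c ≠ 0 := Nat.cast_ne_zero.mpr Fintype.card_ne_zero
  refine ⟨c⁻¹ • ∑ h : H, (θ h ∘ₗ pr ∘ₗ θ h⁻¹), ?_, ?_, ?_⟩
  · intro g v
    have key : ∀ w : U, (∑ h : H, (θ h ∘ₗ pr ∘ₗ θ h⁻¹)) w
        = ∑ h : H, θ h (pr (θ h⁻¹ w)) := by
      intro w; simp [LinearMap.sum_apply]
    have reidx : ∑ h : H, θ h (pr (θ h⁻¹ (θ g v)))
        = ∑ h : H, θ g (θ h (pr (θ h⁻¹ v))) := by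
      rw [← Equiv.sum_comp (Equiv.mulLeft g) (fun h => θ h (pr (θ h⁻¹ (θ g v))))]
      refine Finset.sum_congr rfl fun h _ => ?_
      have h1 : θ ((g * h)⁻¹) (θ g v) = θ h⁻¹ v := by
        have : θ ((g * h)⁻¹) (θ g v) = θ ((g * h)⁻¹ * g) v := by
          rw [map_mul]; rfl
        rw [this]; congr 1; group
      have h2 : θ (g * h) = θ g * θ h := map_mul θ g h
      simp only [Equiv.coe_mulLeft, h1, h2]
      rfl
    simp only [LinearMap.smul_apply, key, reidx, ← map_sum, ← map_smul]
  · intro v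
    simp only [LinearMap.smul_apply, LinearMap.sum_apply, LinearMap.comp_apply]
    exact Submodule.smul_mem _ _ (Submodule.sum_mem _ fun h _ => hp h _ (hpr_mem _))
  · intro v hv
    simp only [LinearMap.smul_apply, LinearMap.sum_apply, LinearMap.comp_apply]
    have : ∀ h : H, θ h (pr (θ h⁻¹ v)) = v := by
      intro h
      rw [hpr_fix _ (hp h⁻¹ v hv)]
      have : θ h (θ h⁻¹ v) = θ (h * h⁻¹) v := by rw [map_mul]; rfl
      simp [this]
    rw [Finset.sum_congr rfl fun h _ => this h, Finset.sum_const, Finset.card_univ]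
    rw [← Nat.cast_smul_eq_nsmul ℂ, smul_smul, inv_mul_cancel₀ hc0, one_smul]

lemma common_eigenvector {W : Type*} [AddCommGroup W] [Module ℂ W]
    [FiniteDimensional ℂ W] {ι : Type*} [Fintype ι] (T : ι → (W →ₗ[ℂ] W))
    (p₀ : Submodule ℂ W) (hne : p₀ ≠ ⊥) (hinv : ∀ i, ∀ v ∈ p₀, T i v ∈ p₀)
    (hcomm : ∀ i j, ∀ v ∈ p₀, T i (T j v) = T j (T i v)) :
    ∃ v ∈ p₀, v ≠ 0 ∧ ∀ i, ∃ μ : ℂ, T i v = μ • v := by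
  classical
  have hker : ∀ (i : ι) (μ : ℂ) (v : W),
      v ∈ LinearMap.ker (T i - μ • LinearMap.id) ↔ T i v = μ • v := by
    intro i μ v
    simp [LinearMap.mem_ker, sub_eq_zero]
  have key : ∀ s : Finset ι, ∃ p : Submodule ℂ W, p ≤ p₀ ∧ p ≠ ⊥ ∧
      (∀ i, ∀ v ∈ p, T i v ∈ p) ∧ ∀ i ∈ s, ∃ μ : ℂ, ∀ v ∈ p, T i v = μ • v := by
    intro s
    induction s using Finset.induction with
    | empty => exact ⟨p₀, le_refl _, hne, hinv, by simp⟩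
    | insert j s hjs IH =>
      obtain ⟨p, hle, hpne, hpinv, hs⟩ := IH
      have hmap' : p ≤ p.comap (T j) := fun v hv => hpinv j v hv
      set f : p →ₗ[ℂ] p := (T j).restrict hmap'
      haveI : Nontrivial p := Submodule.nontrivial_iff_ne_bot.mpr hpne
      obtain ⟨μ, hμ⟩ := Module.End.exists_eigenvalue f
      obtain ⟨w, hw⟩ := hμ.exists_hasEigenvector
      have hw0 : (w : W) ≠ 0 := fun h => hw.2 (Subtype.ext h)
      have hweq : T j (w : W) = μ • (w : W) := by
        have := hw.apply_eq_smul
        have h2 : ((f w : p) : W) = T j (w : W) := rfl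
        rw [this] at h2
        simpa using h2.symm
      refine ⟨p ⊓ LinearMap.ker (T j - μ • LinearMap.id),
        le_trans inf_le_left hle, ?_, ?_, ?_⟩
      · rw [Submodule.ne_bot_iff]
        exact ⟨w, Submodule.mem_inf.mpr ⟨w.2, (hker j μ w).mpr hweq⟩, hw0⟩
      · intro i v hv
        obtain ⟨hv1, hv2⟩ := Submodule.mem_inf.mp hv
        have hveq : T j v = μ • v := (hker j μ v).mp hv2
        refine Submodule.mem_inf.mpr ⟨hpinv i v hv1, (hker j μ _).mpr ?_⟩
        rw [hcomm j i v (hle hv1), hveq, map_smul]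
      · intro i hi
        rcases Finset.mem_insert.mp hi with h | h
        · subst h
          exact ⟨μ, fun v hv => (hker i μ v).mp (Submodule.mem_inf.mp hv).2⟩
        · obtain ⟨μ', hμ'⟩ := hs i h
          exact ⟨μ', fun v hv => hμ' v (Submodule.mem_inf.mp hv).1⟩
  obtain ⟨p, hle, hpne, _, hs⟩ := key Finset.univ
  obtain ⟨v, hv, hv0⟩ := Submodule.ne_bot_iff _ |>.mp hpne
  refine ⟨v, hle hv, hv0, fun i => ?_⟩
  obtain ⟨μ, hμ⟩ := hs i (Finset.mem_univ i)
  exact ⟨μ, hμ v hv⟩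


/-- A representation is irreducible if it is nonzero and has no proper nonzero
invariant subspaces. -/
def IsIrreducibleRep {k G V : Type*} [Field k] [Monoid G] [AddCommGroup V] [Module k V]
    (ρ : Representation k G V) : Prop :=
  (⊥ : Submodule k V) ≠ ⊤ ∧
    ∀ p : Submodule k V, (∀ g : G, ∀ v ∈ p, ρ g v ∈ p) → p = ⊥ ∨ p = ⊤

/-- Clifford-theoretic lemma: if `N` is a normal subgroup of a finite group `G` with
abelian quotient and `V` is an irreducible complex representation of `G` whose
restriction to `N` is not irreducible, then there is a nontrivial character `χ` of `G`
trivial on `N` with `V ⊗ χ ≅ V`. -/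
theorem clifford_character_twist {G : Type*} [Group G] [Finite G] (N : Subgroup G)
    [N.Normal] (habelian : ∀ a b : G, a * b * a⁻¹ * b⁻¹ ∈ N)
    {V : Type*} [AddCommGroup V] [Module ℂ V] [FiniteDimensional ℂ V]
    (ρ : Representation ℂ G V) (hρ : IsIrreducibleRep ρ)
    (hres : ¬ IsIrreducibleRep (ρ.comp N.subtype)) :
    ∃ χ : G →* ℂˣ, χ ≠ 1 ∧ (∀ n ∈ N, χ n = 1) ∧
      ∃ e : V ≃ₗ[ℂ] V, ∀ g : G, ∀ v : V, e ((χ g : ℂ) • ρ g v) = ρ g (e v) := by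
  classical
  have hbot : (⊥ : Submodule ℂ V) ≠ ⊤ := hρ.1
  -- basic multiplication facts
  have hmul : ∀ (a b : G) (v : V), ρ a (ρ b v) = ρ (a * b) v := by
    intro a b v; rw [map_mul]; rfl
  have hinvρ : ∀ (g : G) (v : V), ρ g (ρ g⁻¹ v) = v := by
    intro g v; rw [hmul]; simp
  have hinvρ' : ∀ (g : G) (v : V), ρ g⁻¹ (ρ g v) = v := by
    intro g v; rw [hmul]; simp
  -- Step 1: a proper nonzero N-invariant subspace
  have hres' : ∃ Wp : Submodule ℂ V,
      (∀ n : N, ∀ v ∈ Wp, (ρ.comp N.subtype) n v ∈ Wp) ∧ Wp ≠ ⊥ ∧ Wp ≠ ⊤ := by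
    rw [IsIrreducibleRep, not_and_or] at hres
    rcases hres with h | h
    · exact absurd hbot h
    · push_neg at h
      obtain ⟨Wp, h1, h2, h3⟩ := h
      exact ⟨Wp, h1, h2, h3⟩
  obtain ⟨Wp, hWinv, hWbot, hWtop⟩ := hres'
  -- Step 2: Maschke for N gives an N-equivariant projection onto Wp
  obtain ⟨π, hπeq, hπmem, hπfix⟩ := maschke_proj (ρ.comp N.subtype) Wp hWinv
  -- the N-commutant A
  let A : Submodule ℂ (V →ₗ[ℂ] V) :=
    { carrier := {f | ∀ n ∈ N, ∀ v : V, ρ n (f v) = f (ρ n v)}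
      add_mem' := fun hf hg n hn v => by simp [hf n hn v, hg n hn v]
      zero_mem' := fun n hn v => by simp
      smul_mem' := fun c f hf n hn v => by simp [hf n hn v] }
  have hmemA : ∀ f : V →ₗ[ℂ] V, f ∈ A ↔ ∀ n ∈ N, ∀ v : V, ρ n (f v) = f (ρ n v) :=
    fun f => Iff.rfl
  -- the scalars S
  let S : Submodule ℂ (V →ₗ[ℂ] V) := ℂ ∙ (LinearMap.id : V →ₗ[ℂ] V)
  have hSA : S ≤ A := by
    intro f hf
    obtain ⟨c, rfl⟩ := Submodule.mem_span_singleton.mp hf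
    intro n hn v; simp
  have hπA : π ∈ A := by
    intro n hn v
    exact (hπeq ⟨n, hn⟩ v).symm
  have hπS : π ∉ S := by
    intro hmem
    obtain ⟨c, hc⟩ := Submodule.mem_span_singleton.mp hmem
    by_cases hc0 : c = 0
    · obtain ⟨w, hw, hw0⟩ := Submodule.ne_bot_iff _ |>.mp hWbot
      have : π w = w := hπfix w hw
      rw [← hc] at this
      simp [hc0] at this
      exact hw0 this.symm
    · apply hWtop
      rw [eq_top_iff]
      intro v _
      have h1 : π v = c • v := by rw [← hc]; simp
      have h2 : π v ∈ Wp := hπmem v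
      rw [h1] at h2
      have := Submodule.smul_mem Wp c⁻¹ h2
      rwa [smul_smul, inv_mul_cancel₀ hc0, one_smul] at this
  -- the conjugation representation
  set Φ : Representation ℂ G (V →ₗ[ℂ] V) := Representation.linHom ρ ρ with hΦdef
  have hΦ : ∀ (g : G) (f : V →ₗ[ℂ] V) (v : V), Φ g f v = ρ g (f (ρ g⁻¹ v)) :=
    fun g f v => rfl
  have hΦmul : ∀ (g h : G) (f : V →ₗ[ℂ] V), Φ g (Φ h f) = Φ (g * h) f := by
    intro g h f; rw [map_mul]; rfl
  have hΦfixA : ∀ f ∈ A, ∀ n ∈ N, Φ n f = f := by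
    intro f hf n hn
    ext v
    rw [hΦ n f v, hf n hn, hinvρ]
  -- S is Φ-invariant
  have hSinv : ∀ g : G, ∀ f ∈ S, Φ g f ∈ S := by
    intro g f hf
    obtain ⟨c, rfl⟩ := Submodule.mem_span_singleton.mp hf
    refine Submodule.mem_span_singleton.mpr ⟨c, ?_⟩
    ext v
    rw [map_smul]
    simp [hΦ, hinvρ]
  -- A is Φ-invariant
  have hAinv : ∀ g : G, ∀ f ∈ A, Φ g f ∈ A := by
    intro g f hf n hn v
    have hm : g⁻¹ * n * g ∈ N := by
      have := (inferInstance : N.Normal).conj_mem n hn g⁻¹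
      simpa using this
    rw [hΦ, hΦ, hmul n g, hmul g⁻¹ n]
    have h1 : n * g = g * (g⁻¹ * n * g) := by group
    rw [h1, ← hmul g (g⁻¹ * n * g), hf _ hm, hmul]
    have h2 : g⁻¹ * n * g * g⁻¹ = g⁻¹ * n := by group
    rw [h2]
  -- Maschke for G on End(V) with the scalars
  obtain ⟨P, hPeq, hPmem, hPfix⟩ := maschke_proj Φ S hSinv
  -- the complement C
  set C : Submodule ℂ (V →ₗ[ℂ] V) := A ⊓ LinearMap.ker P with hCdef
  have hCne : C ≠ ⊥ := by
    rw [Submodule.ne_bot_iff]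
    refine ⟨π - P π, Submodule.mem_inf.mpr ⟨?_, ?_⟩, ?_⟩
    · exact sub_mem hπA (hSA (hPmem π))
    · rw [LinearMap.mem_ker, map_sub, hPfix _ (hPmem π), sub_self]
    · intro h
      apply hπS
      have : π = P π := by rwa [sub_eq_zero] at h
      rw [this]; exact hPmem π
  have hCinv : ∀ g : G, ∀ f ∈ C, Φ g f ∈ C := by
    intro g f hf
    obtain ⟨hf1, hf2⟩ := Submodule.mem_inf.mp hf
    refine Submodule.mem_inf.mpr ⟨hAinv g f hf1, ?_⟩
    rw [LinearMap.mem_ker, hPeq g f, LinearMap.mem_ker.mp hf2, map_zero]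
  have hCcomm : ∀ g h : G, ∀ f ∈ C, Φ g (Φ h f) = Φ h (Φ g f) := by
    intro g h f hf
    have hfA : f ∈ A := (Submodule.mem_inf.mp hf).1
    rw [hΦmul, hΦmul]
    have hcN : h⁻¹ * g⁻¹ * h * g ∈ N := by simpa using habelian h⁻¹ g⁻¹
    have h1 : g * h = (h * g) * (g⁻¹ * h⁻¹ * g * h) := by group
    have h2 : g⁻¹ * h⁻¹ * g * h ∈ N := by simpa using habelian g⁻¹ h⁻¹
    rw [h1, ← hΦmul (h * g) _ f, hΦfixA f hfA _ h2]
  -- the common eigenvector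
  haveI := Fintype.ofFinite G
  obtain ⟨e, heC, he0, hμex⟩ := common_eigenvector (fun g : G => Φ g) C hCne hCinv hCcomm
  choose μ hμeq using hμex
  have heA : e ∈ A := (Submodule.mem_inf.mp heC).1
  have heK : e ∈ LinearMap.ker P := (Submodule.mem_inf.mp heC).2
  -- scalars agreeing on e are equal
  have hsc : ∀ a b : ℂ, a • e = b • e → a = b := by
    intro a b hab
    have : (a - b) • e = 0 := by rw [sub_smul, hab, sub_self]
    rcases smul_eq_zero.mp this with h | h
    · exact sub_eq_zero.mp h
    · exact absurd h he0
  -- Φ g⁻¹ inverts Φ g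
  have hΦinv : ∀ (g : G) (f : V →ₗ[ℂ] V), Φ g⁻¹ (Φ g f) = f := by
    intro g f
    rw [hΦmul, inv_mul_cancel, map_one]
    rfl
  -- μ never vanishes
  have hμne : ∀ g : G, μ g ≠ 0 := by
    intro g h0
    have h1 := hμeq g
    rw [h0, zero_smul] at h1
    have h2 := hΦinv g e
    rw [h1, map_zero] at h2
    exact he0 h2.symm
  have hμmul : ∀ g h : G, μ (g * h) = μ g * μ h := by
    intro g h
    apply hsc
    rw [← hμeq (g * h), ← hΦmul, hμeq h, map_smul, hμeq g, smul_smul,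
      mul_comm (μ h) (μ g)]
  have hμone : μ 1 = 1 := by
    apply hsc
    rw [← hμeq 1, map_one, one_smul]
    rfl
  set χ : G →* ℂˣ :=
    { toFun := fun g => Units.mk0 (μ g) (hμne g)
      map_one' := Units.ext (by simpa using hμone)
      map_mul' := fun g h => Units.ext (by simpa using hμmul g h) } with hχdef
  have hχval : ∀ g : G, (χ g : ℂ) = μ g := fun g => rfl
  refine ⟨χ, ?_, ?_, ?_⟩
  · -- χ is nontrivial
    intro hχ1
    have hμ1 : ∀ g : G, μ g = 1 := by
      intro g
      have h1 : χ g = 1 := by rw [hχ1]; rfl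
      have h2 : (χ g : ℂ) = 1 := by rw [h1]; rfl
      rwa [hχval] at h2
    have hcommρ : ∀ (g : G) (v : V), ρ g (e v) = e (ρ g v) := by
      intro g v
      have h1 := hμeq g
      rw [hμ1 g, one_smul] at h1
      calc ρ g (e v) = (Φ g e) (ρ g v) := by rw [hΦ g e (ρ g v), hinvρ' g v]
        _ = e (ρ g v) := by rw [h1]
    haveI : Nontrivial V := by
      rcases subsingleton_or_nontrivial V with hs | hn
      · exact absurd (by ext v; simp [Subsingleton.elim v (0 : V)]) hbot
      · exact hn
    obtain ⟨c, hc⟩ := Module.End.exists_eigenvalue (e : Module.End ℂ V)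
    obtain ⟨v₀, hv₀⟩ := hc.exists_hasEigenvector
    have hv₀eq : e v₀ = c • v₀ := hv₀.apply_eq_smul
    set K : Submodule ℂ V := LinearMap.ker (e - c • LinearMap.id) with hK
    have hKmem : ∀ v : V, v ∈ K ↔ e v = c • v := by
      intro v
      simp [hK, LinearMap.mem_ker, sub_eq_zero]
    have hKinv : ∀ g : G, ∀ v ∈ K, ρ g v ∈ K := by
      intro g v hv
      rw [hKmem] at hv ⊢
      rw [← hcommρ g v, hv, map_smul]
    have hKne : K ≠ ⊥ :=
      Submodule.ne_bot_iff _ |>.mpr ⟨v₀, (hKmem v₀).mpr hv₀eq, hv₀.2⟩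
    rcases hρ.2 K hKinv with h | h
    · exact hKne h
    · have heS : e ∈ S := by
        refine Submodule.mem_span_singleton.mpr ⟨c, ?_⟩
        ext v
        have hvK : v ∈ K := h ▸ Submodule.mem_top
        have := (hKmem v).mp hvK
        simpa using this.symm
      have h2 := hPfix e heS
      rw [LinearMap.mem_ker.mp heK] at h2
      exact he0 h2.symm
  · -- χ is trivial on N
    intro n hn
    apply Units.ext
    rw [hχval]
    show μ n = 1
    apply hsc
    rw [← hμeq n, hΦfixA e heA n hn, one_smul]
  · -- the equivalence
    have hrel : ∀ (g : G) (v : V), ρ g (e v) = μ g • e (ρ g v) := by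
      intro g v
      calc ρ g (e v) = (Φ g e) (ρ g v) := by rw [hΦ g e (ρ g v), hinvρ' g v]
        _ = μ g • e (ρ g v) := by rw [hμeq g]; rfl
    have hkerinv : ∀ g : G, ∀ v ∈ LinearMap.ker e, ρ g v ∈ LinearMap.ker e := by
      intro g v hv
      rw [LinearMap.mem_ker] at hv ⊢
      have h2 := (hrel g v).symm
      rw [hv, map_zero] at h2
      rcases smul_eq_zero.mp h2 with h | h
      · exact absurd h (hμne g)
      · exact h
    have hker : LinearMap.ker e = ⊥ := by
      rcases hρ.2 (LinearMap.ker e) hkerinv with h | h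
      · exact h
      · exact absurd (LinearMap.ker_eq_top.mp h) he0
    have hrangeinv : ∀ g : G, ∀ v ∈ LinearMap.range e, ρ g v ∈ LinearMap.range e := by
      intro g v hv
      obtain ⟨w, rfl⟩ := LinearMap.mem_range.mp hv
      rw [hrel g w]
      exact Submodule.smul_mem _ _ (LinearMap.mem_range_self e _)
    have hrange : LinearMap.range e = ⊤ := by
      rcases hρ.2 (LinearMap.range e) hrangeinv with h | h
      · exact absurd (LinearMap.range_eq_bot.mp h) he0
      · exact h
    have hbij : Function.Bijective e :=
      ⟨LinearMap.ker_eq_bot.mp hker, LinearMap.range_eq_top.mp hrange⟩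
    refine ⟨LinearEquiv.ofBijective e hbij, fun g v => ?_⟩
    rw [LinearEquiv.ofBijective_apply, LinearEquiv.ofBijective_apply, map_smul,
      hχval]
    exact (hrel g v).symm
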